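/- Let K ∈ ℕ and suppose that for every n, every column of A^{(n)} appears at least K times among the columns of A^{(n)}. Then Property A holds for this K: there exist a constant C > 0 independent of n such that for all n there are pairwise disjoint non-empty subsets I_1,…,I_K ⊆ {1,…,n} with det(Â_{I_l} (Â_{I_l})ᵀ) ≥ C for every l = 1,…,K. -/

import Mathlib

open Matrix in
private lemma aux_det_ge {m : ℕ} (M : Matrix (Fin m) (Fin m) ℝ) (a : ℝ) (ha : 0 < a)
    (hM : M.IsHermitian) (h : (a • M - 1).PosSemidef) : (a⁻¹) ^ m ≤ M.det := by
  have heig : ∀ i, a⁻¹ ≤ hM.eigenvalues i := by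
    intro i
    set v : Fin m → ℝ := ⇑(hM.eigenvectorBasis i) with hv
    have hvv : v ⬝ᵥ v = 1 := by
      have h1 : ‖hM.eigenvectorBasis i‖ = 1 := hM.eigenvectorBasis.orthonormal.1 i
      have h2 : (inner ℝ (hM.eigenvectorBasis i) (hM.eigenvectorBasis i) : ℝ) = 1 := by
        rw [real_inner_self_eq_norm_sq, h1]; norm_num
      rw [← h2, EuclideanSpace.inner_eq_star_dotProduct]
      simp only [dotProduct]
      rfl
    have hMv : M *ᵥ v = hM.eigenvalues i • v := hM.mulVec_eigenvectorBasis i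
    have h2 := h.dotProduct_mulVec_nonneg v
    rw [sub_mulVec, smul_mulVec, hMv, one_mulVec, dotProduct_sub, dotProduct_smul,
      dotProduct_smul] at h2
    simp only [star_trivial, smul_eq_mul, hvv, mul_one] at h2
    rw [inv_eq_one_div, div_le_iff₀ ha]
    nlinarith [h2]
  rw [hM.det_eq_prod_eigenvalues]
  calc (a⁻¹) ^ m = ∏ _i : Fin m, a⁻¹ := by simp
  _ ≤ ∏ i, hM.eigenvalues i :=
    Finset.prod_le_prod (fun _ _ => by positivity) (fun i _ => heig i)

private lemma aux_count {n : ℕ} (T : Finset (Fin n)) (K l : ℕ) (hl : l < K) (hKT : K ≤ T.card) :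
    0 < (T.filter (fun j => (T.filter (· < j)).card % K = l)).card ∧
    T.card ≤ 2 * K * (T.filter (fun j => (T.filter (· < j)).card % K = l)).card := by
  set f : Fin n → ℕ := fun j => (T.filter (· < j)).card with hf
  have hK : 0 < K := Nat.lt_of_le_of_lt (Nat.zero_le l) hl
  have hmono : ∀ a ∈ T, ∀ b ∈ T, a < b → f a < f b := by
    intro a ha b hb hab
    apply Finset.card_lt_card
    constructor
    · exact Finset.filter_subset_filter _ (fun x hx => hx) |>.trans
        (by intro x hx; simp only [Finset.mem_filter] at hx ⊢; exact ⟨hx.1, hx.2.trans hab⟩)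
    · intro hsub
      have : a ∈ T.filter (· < b) := Finset.mem_filter.2 ⟨ha, hab⟩
      have := hsub this
      simp at this
  have hinj : Set.InjOn f T := by
    intro a ha b hb hfab
    rcases lt_trichotomy a b with h | h | h
    · exact absurd hfab (hmono a ha b hb h).ne
    · exact h
    · exact absurd hfab.symm (hmono b hb a ha h).ne
  have hlt : ∀ j ∈ T, f j < T.card := by
    intro j hj
    apply Finset.card_lt_card
    constructor
    · exact Finset.filter_subset _ _
    · intro hsub
      have := hsub hj
      simp at this
  have himg : T.image f = Finset.range T.card := by
    apply Finset.eq_of_subset_of_card_le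
    · intro x hx
      simp only [Finset.mem_image] at hx
      obtain ⟨j, hj, rfl⟩ := hx
      exact Finset.mem_range.2 (hlt j hj)
    · rw [Finset.card_range, Finset.card_image_of_injOn hinj]
  have hcard : (T.filter (fun j => f j % K = l)).card
      = ((Finset.range T.card).filter (fun t => t % K = l)).card := by
    rw [← himg, Finset.filter_image]
    rw [Finset.card_image_of_injOn (hinj.mono (Finset.filter_subset _ _))]
  have hlow : T.card / K ≤ ((Finset.range T.card).filter (fun t => t % K = l)).card := by
    have : ∀ i ∈ Finset.range (T.card / K), i * K + l ∈
        (Finset.range T.card).filter (fun t => t % K = l) := by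
      intro i hi
      simp only [Finset.mem_range] at hi
      simp only [Finset.mem_filter, Finset.mem_range]
      refine ⟨?_, ?_⟩
      · have h1 : i + 1 ≤ T.card / K := hi
        have h2 : (i + 1) * K ≤ (T.card / K) * K := Nat.mul_le_mul_right _ h1
        have h3 : (T.card / K) * K ≤ T.card := Nat.div_mul_le_self _ _
        have h4 : i * K + l < (i + 1) * K := by rw [add_mul, one_mul]; omega
        omega
      · rw [mul_comm, Nat.mul_add_mod]
        exact Nat.mod_eq_of_lt hl
    calc T.card / K = (Finset.range (T.card / K)).card := (Finset.card_range _).symm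
    _ ≤ _ := Finset.card_le_card_of_injOn (fun i => i * K + l) this (by
        intro a _ b _ hab
        have hab' : a * K + l = b * K + l := hab
        exact Nat.eq_of_mul_eq_mul_right hK (by omega))
  have hq : 1 ≤ T.card / K := (Nat.one_le_div_iff hK).2 hKT
  have hmod := Nat.div_add_mod T.card K
  have hmlt : T.card % K < K := Nat.mod_lt _ hK
  constructor
  · rw [hcard]; omega
  · rw [hcard]
    set c := ((Finset.range T.card).filter (fun t => t % K = l)).card
    have h1 : T.card / K ≤ c := hlow
    nlinarith [hq, hmod, hmlt, h1]

open Matrix Finset in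
/-- **Repeated columns imply Property A.**
Let `K ∈ ℕ`, and suppose every column of `A` appears at least `K` times among the
columns of `A`.  Then Property A holds for this `K`: there is a constant `C > 0`,
independent of `n`, such that for every `n` there are pairwise disjoint non-empty
subsets `I₁, …, I_K ⊆ {1, …, n}` with `det(Â_{I_l} (Â_{I_l})ᵀ) ≥ C` for every `l`. -/
theorem propertyA_of_repeated_columns
    (m : ℕ) (hm : 0 < m)
    (A : ∀ n : ℕ, Matrix (Fin m) (Fin n) ℝ)
    (b : ∀ n : ℕ, Fin m → ℝ)
    (hApos : ∀ n, ∀ i j, 0 < A n i j)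
    (hbpos : ∀ n, ∀ i, 0 < b n i)
    (hArank : ∀ n, m < n → (A n).rank = m)
    (hint : ∀ n, m < n → ∃ x : Fin n → ℝ, (∀ j, 0 < x j) ∧ (A n).mulVec x = b n)
    -- the barycenter weights `w`:
    (w : ∀ n : ℕ, Fin n → ℝ)
    (hw : ∀ n, m < n → (∀ j, 0 < w n j) ∧
      (∃ u : Fin m → ℝ, w n = (A n).transpose.mulVec u) ∧
      (A n).mulVec (fun j => (w n j)⁻¹) = b n)
    -- `Ã_{ij} = A_{ij}/w_j`, `S = (ÃÃᵀ)^{1/2}`, `Â = S⁻¹Ã`: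
    (Atil : ∀ n : ℕ, Matrix (Fin m) (Fin n) ℝ)
    (hAtil : ∀ n i j, Atil n i j = A n i j / w n j)
    (S : ∀ n : ℕ, Matrix (Fin m) (Fin m) ℝ)
    (hS : ∀ n, m < n → (S n).PosDef ∧ S n * S n = Atil n * (Atil n).transpose)
    (Ahat : ∀ n : ℕ, Matrix (Fin m) (Fin n) ℝ)
    (hAhat : ∀ n, Ahat n = (S n)⁻¹ * Atil n)
    -- each column of `A` appears at least `K` times:
    (K : ℕ) (hK : 0 < K)
    (hrep : ∀ n, m < n → ∀ j : Fin n,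
      K ≤ (Finset.univ.filter (fun j' : Fin n => ∀ i, A n i j' = A n i j)).card) :
    ∃ C > (0 : ℝ), ∀ n, m < n →
      ∃ I : Fin K → Finset (Fin n),
        (∀ l, (I l).Nonempty) ∧
        (∀ l l', l ≠ l' → Disjoint (I l) (I l')) ∧
        (∀ l, C ≤ (((Ahat n).submatrix id (fun j : (I l : Finset (Fin n)) => (j : Fin n))) *
          ((Ahat n).submatrix id (fun j : (I l : Finset (Fin n)) => (j : Fin n))).transpose).det) := by
  classical
  have haK : (0 : ℝ) < 2 * K := by positivity
  refine ⟨((2 * K : ℝ))⁻¹ ^ m, by positivity, ?_⟩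
  intro n hn
  set B := Ahat n with hBdef
  -- the column classes
  set cls : Fin n → Finset (Fin n) :=
    fun j => Finset.univ.filter (fun j' => ∀ i, A n i j' = A n i j) with hclsdef
  have hmem : ∀ j, j ∈ cls j := fun j => Finset.mem_filter.2 ⟨Finset.mem_univ _, fun i => rfl⟩
  have hmem_iff : ∀ {j j'}, j' ∈ cls j ↔ ∀ i, A n i j' = A n i j := by
    intro j j'
    simp [hclsdef]
  have hcls_eq : ∀ {j j'}, j' ∈ cls j → cls j' = cls j := by
    intro j j' hj'
    rw [hmem_iff] at hj'
    ext x
    rw [hmem_iff, hmem_iff]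
    constructor
    · intro h i; rw [h i, hj' i]
    · intro h i; rw [h i, ← hj' i]
  -- canonical representative of each class
  set r : Fin n → Fin n := fun j => (cls j).min' ⟨j, hmem j⟩ with hrdef
  have hr_mem : ∀ j, r j ∈ cls j := fun j => Finset.min'_mem _ _
  have hr_of_mem : ∀ {j j'}, j' ∈ cls j → r j' = r j := by
    intro j j' hj'
    have hce : cls j' = cls j := hcls_eq hj'
    refine le_antisymm (Finset.min'_le _ _ ?_) (Finset.min'_le _ _ ?_)
    · rw [hce]; exact Finset.min'_mem _ _
    · rw [← hce]; exact Finset.min'_mem _ _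
  have hrr : ∀ j, r (r j) = r j := fun j => hr_of_mem (hr_mem j)
  have hfiber : ∀ j, Finset.univ.filter (fun x => r x = r j) = cls j := by
    intro j
    ext x
    simp only [Finset.mem_filter, Finset.mem_univ, true_and]
    constructor
    · intro h
      have h1 : cls (r x) = cls x := hcls_eq (hr_mem x)
      have h2 : cls (r j) = cls j := hcls_eq (hr_mem j)
      have : cls x = cls j := by rw [← h1, h, h2]
      rw [← this]; exact hmem x
    · exact fun h => hr_of_mem h
  -- the rank of an element inside its class, and the subsets
  set rk : Fin n → ℕ := fun j => ((cls j).filter (· < j)).card with hrkdef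
  set Isets : Fin K → Finset (Fin n) :=
    fun l => Finset.univ.filter (fun j => rk j % K = (l : ℕ)) with hIdef
  have hKcard : ∀ j, K ≤ (cls j).card := fun j => hrep n hn j
  -- per-class count facts
  have hcnt : ∀ c l, ((cls c).filter (fun x => rk x % K = (l : Fin K) → True)) = _ := fun c l => rfl
  have hfilter_eq : ∀ (c : Fin n) (l : Fin K),
      (cls c).filter (fun x => rk x % K = (l : ℕ))
        = (cls c).filter (fun x => ((cls c).filter (· < x)).card % K = (l : ℕ)) := by
    intro c l
    apply Finset.filter_congr
    intro x hx
    have : cls x = cls c := hcls_eq hx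
    simp only [hrkdef, this]
  have hcount : ∀ (c : Fin n) (l : Fin K),
      0 < ((cls c).filter (fun x => rk x % K = (l : ℕ))).card ∧
      (cls c).card ≤ 2 * K * ((cls c).filter (fun x => rk x % K = (l : ℕ))).card := by
    intro c l
    rw [hfilter_eq c l]
    exact aux_count (cls c) K (l : ℕ) l.isLt (hKcard c)
  refine ⟨Isets, ?_, ?_, ?_⟩
  · -- nonempty
    intro l
    have hn0 : (0 : ℕ) < n := lt_of_le_of_lt (Nat.zero_le m) hn
    set j0 : Fin n := ⟨0, hn0⟩
    obtain ⟨x, hx⟩ := Finset.card_pos.1 (hcount j0 l).1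
    exact ⟨x, Finset.mem_filter.2 ⟨Finset.mem_univ _, (Finset.mem_filter.1 hx).2⟩⟩
  · -- disjoint
    intro l l' hll'
    rw [Finset.disjoint_left]
    intro x hx hx'
    have h1 := (Finset.mem_filter.1 hx).2
    have h2 := (Finset.mem_filter.1 hx').2
    exact hll' (Fin.ext (h1 ▸ h2 ▸ rfl : (l : ℕ) = (l' : ℕ)))
  · -- the determinant bound
    intro l
    set P : Matrix (Fin m) ((Isets l : Finset (Fin n)) : Type) ℝ :=
      (Ahat n).submatrix id (fun j : (Isets l : Finset (Fin n)) => (j : Fin n)) with hPdef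
    -- basic facts about S
    obtain ⟨hSpd, hSsq⟩ := hS n hn
    have hSdet : IsUnit (S n).det := isUnit_iff_ne_zero.2 (ne_of_gt hSpd.det_pos)
    have hSsymm : (S n)ᵀ = S n := by
      rw [← Matrix.conjTranspose_eq_transpose_of_trivial]
      exact hSpd.isHermitian
    have hBBt : B * Bᵀ = 1 := by
      rw [hBdef, hAhat, Matrix.transpose_mul, Matrix.transpose_nonsing_inv, hSsymm,
        Matrix.mul_assoc ((S n)⁻¹) (Atil n), ← Matrix.mul_assoc (Atil n) ((Atil n)ᵀ), ← hSsq,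
        Matrix.mul_assoc (S n) (S n), Matrix.mul_nonsing_inv _ hSdet, Matrix.mul_one,
        Matrix.nonsing_inv_mul _ hSdet]
    -- columns of B are constant on classes
    have hwcol : ∀ {j j'}, j' ∈ cls j → w n j' = w n j := by
      intro j j' hj'
      obtain ⟨u, hu⟩ := (hw n hn).2.1
      rw [hu]
      simp only [Matrix.mulVec, Matrix.transpose_apply, dotProduct]
      exact Finset.sum_congr rfl fun i _ => by rw [(hmem_iff.1 hj') i]
    have hBcol : ∀ {j j'}, j' ∈ cls j → ∀ i, B i j' = B i j := by
      intro j j' hj' i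
      rw [hBdef, hAhat, Matrix.mul_apply, Matrix.mul_apply]
      refine Finset.sum_congr rfl fun k _ => ?_
      rw [hAtil, hAtil, hwcol hj', (hmem_iff.1 hj') k]
    -- hermitian
    have hPT : Pᴴ = Pᵀ := Matrix.conjTranspose_eq_transpose_of_trivial _
    have hherm : (P * Pᵀ).IsHermitian := by
      rw [← hPT]; exact Matrix.isHermitian_mul_conjTranspose_self P
    -- positive semidefiniteness of 2K • (P Pᵀ) - 1
    have hpsd : ((2 * K : ℝ) • (P * Pᵀ) - 1).PosSemidef := by
      rw [Matrix.posSemidef_iff_dotProduct_mulVec]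
      constructor
      · rw [Matrix.IsHermitian, Matrix.conjTranspose_sub, Matrix.conjTranspose_smul,
          Matrix.conjTranspose_one, hherm.eq]
        norm_num
      · intro x
        simp only [star_trivial]
        rw [Matrix.sub_mulVec, Matrix.smul_mulVec, Matrix.one_mulVec,
          dotProduct_sub, dotProduct_smul, smul_eq_mul, sub_nonneg]
        set g : Fin n → ℝ := fun j => ∑ i, x i * B i j with hgdef
        have hgcl : ∀ {j j'}, j' ∈ cls j → g j' = g j := by
          intro j j' hj'
          exact Finset.sum_congr rfl fun i _ => by rw [hBcol hj' i]
        have hquadM : x ⬝ᵥ (P * Pᵀ) *ᵥ x = ∑ j ∈ Isets l, g j ^ 2 := by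
          rw [← Matrix.mulVec_mulVec, Matrix.dotProduct_mulVec, Matrix.mulVec_transpose,
            ← Finset.sum_coe_sort (Isets l) (fun j => g j ^ 2)]
          refine Finset.sum_congr rfl fun j _ => ?_
          simp only [Matrix.vecMul, dotProduct, hgdef, sq, hPdef,
            Matrix.submatrix_apply, id_eq, hBdef]
        have hquadI : x ⬝ᵥ x = ∑ j : Fin n, g j ^ 2 := by
          have h1 : x ⬝ᵥ x = x ⬝ᵥ (B * Bᵀ) *ᵥ x := by rw [hBBt, Matrix.one_mulVec]
          rw [h1, ← Matrix.mulVec_mulVec, Matrix.dotProduct_mulVec, Matrix.mulVec_transpose]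
          simp only [Matrix.vecMul, dotProduct, hgdef, sq]
        rw [hquadM, hquadI]
        -- fiberwise comparison
        have hfib1 : ∑ j : Fin n, g j ^ 2
            = ∑ c : Fin n, ∑ j ∈ Finset.univ.filter (fun x => r x = c), g j ^ 2 :=
          (Finset.sum_fiberwise_of_maps_to (fun x _ => Finset.mem_univ (r x)) _).symm
        have hfib2 : ∑ j ∈ Isets l, g j ^ 2
            = ∑ c : Fin n, ∑ j ∈ (Isets l).filter (fun x => r x = c), g j ^ 2 :=
          (Finset.sum_fiberwise_of_maps_to (fun x _ => Finset.mem_univ (r x)) _).symm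
        rw [hfib1, hfib2, Finset.mul_sum]
        refine Finset.sum_le_sum fun c _ => ?_
        by_cases hc : r c = c
        · have hfc : Finset.univ.filter (fun x => r x = c) = cls c := by
            have h := hfiber c
            rw [hc] at h
            exact h
          have hfc2 : (Isets l).filter (fun x => r x = c)
              = (cls c).filter (fun x => rk x % K = (l : ℕ)) := by
            ext y
            simp only [hIdef, Finset.mem_filter, Finset.mem_univ, true_and]
            constructor
            · rintro ⟨h1, h2⟩
              refine ⟨?_, h1⟩
              have hyc : cls c = cls y := by rw [← h2]; exact hcls_eq (hr_mem y)
              rw [hyc]; exact hmem y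
            · rintro ⟨h1, h2⟩
              exact ⟨h2, by rw [hr_of_mem h1, hc]⟩
          rw [hfc, hfc2]
          have hconst1 : ∑ j ∈ cls c, g j ^ 2 = ((cls c).card : ℝ) * g c ^ 2 := by
            rw [Finset.sum_congr rfl (fun j hj => by rw [hgcl hj]), Finset.sum_const,
              nsmul_eq_mul]
          have hconst2 : ∑ j ∈ (cls c).filter (fun x => rk x % K = (l : ℕ)), g j ^ 2
              = (((cls c).filter (fun x => rk x % K = (l : ℕ))).card : ℝ) * g c ^ 2 := by
            rw [Finset.sum_congr rfl
              (fun j hj => by rw [hgcl (Finset.mem_of_mem_filter _ hj)]), Finset.sum_const,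
              nsmul_eq_mul]
          rw [hconst1, hconst2]
          have hcnt2 := (hcount c l).2
          have : ((cls c).card : ℝ)
              ≤ 2 * K * (((cls c).filter (fun x => rk x % K = (l : ℕ))).card : ℝ) := by
            have := Nat.cast_le (α := ℝ) |>.2 hcnt2
            push_cast at this ⊢
            linarith
          nlinarith [sq_nonneg (g c), this]
        · have hempty : Finset.univ.filter (fun x => r x = c) = ∅ := by
            rw [Finset.filter_eq_empty_iff]
            intro x _ hrx
            exact hc (by rw [← hrx, hrr])
          have hempty2 : (Isets l).filter (fun x => r x = c) = ∅ := by
            rw [Finset.filter_eq_empty_iff]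
            intro x _ hrx
            exact hc (by rw [← hrx, hrr])
          rw [hempty, hempty2]
          simp
    -- conclude via eigenvalues
    exact aux_det_ge (P * Pᵀ) (2 * K) haK hherm hpsd
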